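/- arXiv:2210.12135 — 2 statements merged into one kernel-verified Lean document; each statement's English description precedes it below -/
import Mathlib

section
/- Let X be a metric space and let γ : [0,1] → X be a constant-speed geodesic, i.e. dist(γ(s'), γ(t')) = |s' − t'| · dist(γ(0), γ(1)) for all s', t' ∈ [0,1], with γ(0) = μ and γ(1) = ν̃. Let b ∈ (0,1], set ν = γ(b), and assume dist(μ, ν) > 0. For any s ∈ [0,b], let μ_t = γ(s) and t = s/b. Then (1 − t)·dist(μ, μ_t)² + t·dist(ν, μ_t)² ≤ (1 − s)·dist(μ, μ_t)² + s·dist(ν̃, μ_t)². (This is Theorem 1 of the paper: extending a McCann interpolation from one side can only increase the geometric sparse regularizer, stated in the metric-geodesic form that the paper's proof actually uses, since McCann interpolations are exactly the constant-speed geodesics of the Wasserstein-2 space.) -/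
/-- Theorem 1 of the paper (metric-geodesic form): let `γ : [0,1] → X` be a
constant-speed geodesic with `γ 0 = μ` and `γ 1 = ν̃`, let `ν = γ b` for
`b ∈ (0,1]` with `dist μ ν > 0`.  For `s ∈ [0,b]`, `μ_t = γ s` and `t = s / b`,
extending the interpolation can only increase the geometric sparse regularizer:
`(1−t)·dist(μ,μ_t)² + t·dist(ν,μ_t)² ≤ (1−s)·dist(μ,μ_t)² + s·dist(ν̃,μ_t)²`. -/
theorem geodesic_extension_increases_regularizer
    {X : Type*} [MetricSpace X] (γ : ℝ → X)
    (hγ : ∀ s' ∈ Set.Icc (0:ℝ) 1, ∀ t' ∈ Set.Icc (0:ℝ) 1,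
      dist (γ s') (γ t') = |s' - t'| * dist (γ 0) (γ 1))
    (μ νtilde ν : X) (hμ : γ 0 = μ) (hνtilde : γ 1 = νtilde)
    (b : ℝ) (hb : b ∈ Set.Ioc (0:ℝ) 1) (hν : γ b = ν)
    (hpos : 0 < dist μ ν)
    (s : ℝ) (hs : s ∈ Set.Icc (0:ℝ) b) (μt : X) (hμt : γ s = μt)
    (t : ℝ) (ht : t = s / b) :
    (1 - t) * dist μ μt ^ 2 + t * dist ν μt ^ 2 ≤
      (1 - s) * dist μ μt ^ 2 + s * dist νtilde μt ^ 2 := by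
  obtain ⟨hs0, hsb⟩ := hs
  obtain ⟨hb0, hb1⟩ := hb
  have hsI : s ∈ Set.Icc (0:ℝ) 1 := ⟨hs0, hsb.trans hb1⟩
  have hbI : b ∈ Set.Icc (0:ℝ) 1 := ⟨hb0.le, hb1⟩
  have h0 : (0:ℝ) ∈ Set.Icc (0:ℝ) 1 := by norm_num
  have h1 : (1:ℝ) ∈ Set.Icc (0:ℝ) 1 := by norm_num
  set D := dist (γ 0) (γ 1) with hD
  have hμs : dist μ μt = s * D := by
    rw [← hμ, ← hμt, hγ 0 h0 s hsI, abs_of_nonpos (by linarith)]; ring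
  have hνs : dist ν μt = (b - s) * D := by
    rw [← hν, ← hμt, hγ b hbI s hsI, abs_of_nonneg (by linarith)]
  have hνts : dist νtilde μt = (1 - s) * D := by
    rw [← hνtilde, ← hμt, hγ 1 h1 s hsI, abs_of_nonneg (by linarith)]
  have hD0 : 0 ≤ D := dist_nonneg
  have ht' : t * b = s := by rw [ht]; field_simp
  rw [hμs, hνs, hνts]
  nlinarith [sq_nonneg D, mul_nonneg hs0 hD0, mul_nonneg (mul_nonneg hs0 (by linarith : (0:ℝ) ≤ 1 - b)) (sq_nonneg D)]
end

section
/- Let X be a metric space and let γ : [0,1] → X be a constant-speed geodesic, i.e. dist(γ(s'), γ(t')) = |s' − t'| · dist(γ(0), γ(1)) for all s', t' ∈ [0,1], with dist(γ(0), γ(1)) > 0. Let 0 ≤ a < b ≤ 1, set μ = γ(a) and ν = γ(b). For any r ∈ [a,b], let μ_t = γ(r) and t = (r − a)/(b − a). Then (1 − t)·dist(μ, μ_t)² + t·dist(ν, μ_t)² ≤ (1 − r)·dist(γ(0), μ_t)² + r·dist(γ(1), μ_t)². (This is Corollary 1 of the paper in metric-geodesic form: among all pairs of measures containing the McCann interpolation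 between the generators μ and ν, the geometric sparse regularizer of every point of the interpolation is minimized by the pair (μ, ν) itself.) -/
/-- Corollary 1 of the paper (metric-geodesic form): let `γ : [0,1] → X` be a
constant-speed geodesic with `dist (γ 0) (γ 1) > 0`, let `0 ≤ a < b ≤ 1`,
`μ = γ a`, `ν = γ b`.  For `r ∈ [a,b]`, `μ_t = γ r` and `t = (r − a)/(b − a)`,
the geometric sparse regularizer with respect to `(μ, ν)` is at most the one
with respect to the extended pair `(γ 0, γ 1)`:
`(1−t)·dist(μ,μ_t)² + t·dist(ν,μ_t)² ≤ (1−r)·dist(γ 0, μ_t)² + r·dist(γ 1, μ_t)²`. -/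
theorem regularizer_minimized_by_generators
    {X : Type*} [MetricSpace X] (γ : ℝ → X)
    (hγ : ∀ s' ∈ Set.Icc (0:ℝ) 1, ∀ t' ∈ Set.Icc (0:ℝ) 1,
      dist (γ s') (γ t') = |s' - t'| * dist (γ 0) (γ 1))
    (hpos : 0 < dist (γ 0) (γ 1))
    (a b : ℝ) (ha : 0 ≤ a) (hab : a < b) (hb : b ≤ 1)
    (μ ν : X) (hμ : γ a = μ) (hν : γ b = ν)
    (r : ℝ) (hr : r ∈ Set.Icc a b) (μt : X) (hμt : γ r = μt)
    (t : ℝ) (ht : t = (r - a) / (b - a)) :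
    (1 - t) * dist μ μt ^ 2 + t * dist ν μt ^ 2 ≤
      (1 - r) * dist (γ 0) μt ^ 2 + r * dist (γ 1) μt ^ 2 := by
  obtain ⟨har, hrb⟩ := hr
  have h0r : (0:ℝ) ≤ r := le_trans ha har
  have hr1 : r ≤ 1 := le_trans hrb hb
  have hba : (0:ℝ) < b - a := by linarith
  have hIcc : ∀ x : ℝ, a ≤ x → x ≤ b → x ∈ Set.Icc (0:ℝ) 1 := by
    intro x h1 h2; exact ⟨le_trans ha h1, le_trans h2 hb⟩
  set D := dist (γ 0) (γ 1) with hD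
  have d1 : dist μ μt = (r - a) * D := by
    rw [← hμ, ← hμt, hγ a (hIcc a le_rfl hab.le) r (hIcc r har hrb)]
    rw [abs_of_nonpos (by linarith)]; ring
  have d2 : dist ν μt = (b - r) * D := by
    rw [← hν, ← hμt, hγ b (hIcc b hab.le le_rfl) r (hIcc r har hrb)]
    rw [abs_of_nonneg (by linarith)]
  have d3 : dist (γ 0) μt = r * D := by
    rw [← hμt, hγ 0 ⟨le_rfl, zero_le_one⟩ r (hIcc r har hrb)]
    rw [abs_of_nonpos (by linarith)]; ring
  have d4 : dist (γ 1) μt = (1 - r) * D := by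
    rw [← hμt, hγ 1 ⟨zero_le_one, le_rfl⟩ r (hIcc r har hrb)]
    rw [abs_of_nonneg (by linarith)]
  rw [d1, d2, d3, d4]
  have htb : t * (b - a) = r - a := by rw [ht]; field_simp
  have htb2 : (1 - t) * (b - a) = b - r := by nlinarith [htb]
  have key : (1 - t) * (r - a) ^ 2 + t * (b - r) ^ 2 ≤ (1 - r) * r ^ 2 + r * (1 - r) ^ 2 := by
    have h1 : (1 - t) * (r - a) ^ 2 + t * (b - r) ^ 2 = (r - a) * (b - r) := by
      have : ((1 - t) * (r - a) ^ 2 + t * (b - r) ^ 2) * (b - a) = (r - a) * (b - r) * (b - a) := by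
        nlinarith [htb, htb2]
      exact mul_right_cancel₀ (ne_of_gt hba) this
    have h2 : (1 - r) * r ^ 2 + r * (1 - r) ^ 2 = r * (1 - r) := by ring
    rw [h1, h2]
    nlinarith [mul_nonneg ha (sub_nonneg.2 hrb)]
  nlinarith [key, sq_nonneg D, mul_le_mul_of_nonneg_right key (sq_nonneg D)]
end
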